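/- arXiv:2404.17880 — 2 statements merged into one kernel-verified Lean document; each statement's English description precedes it below -/
import Mathlib

section
/- Let n ≥ 3 and s,t ≥ 0 be integers. In S_n, with f_1 = x_1⋯x_{n−2} and J_{n−1} regarded as an ideal of S_n via S_{n−1} ⊂ S_n, define for 0 ≤ d ≤ s+t the ideal L_d by: L_d = (f_1^{s−d} x_1^{t−d})·((f_1) + x_1 J_{n−1})^d if d ≤ min{s,t}; L_d = (x_1^{t−d})·((f_1) + x_1 J_{n−1})^s if s ≤ d ≤ t; L_d = (f_1^{s−d})·J_{n−1}^{d−t}·((f_1) + x_1 J_{n−1})^t if t ≤ d ≤ s; and L_d = J_{n−1}^{d−t}·((f_1) + x_1 J_{n−1})^{s+t−d} if max{s,t} ≤ d ≤ s+t (the descriptions agree on overlaps). Then J_n^s (x_1, x_n)^t = Σ_{d=0}^{s+t} x_n^d · L_d. -/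
open MvPolynomial CategoryTheory

universe u

/-- The product of the `m` cyclically consecutive variables (in the cycle on the first `c`
variables, taken modulo `c`) starting at position `j`, inside `k[x_0,…,x_{n-1}]`
(variables indexed by `ZMod n`). -/
noncomputable def pgen (k : Type u) [Field k] (n c m j : ℕ) : MvPolynomial (ZMod n) k :=
  ∏ l ∈ Finset.range m, X (((j + l) % c : ℕ) : ZMod n)

/-- The ideal of `k[x_0,…,x_{n-1}]` generated by the `c` products of `m` cyclically
consecutive variables in the cycle on the first `c` variables. -/
noncomputable def pathI (k : Type u) [Field k] (n c m : ℕ) : Ideal (MvPolynomial (ZMod n) k) :=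
  Ideal.span {g | ∃ j < c, g = pgen k n c m j}

/-- Same as `pathI` but with the generator starting at position `1` (the second one) omitted. -/
noncomputable def pathJ (k : Type u) [Field k] (n c m : ℕ) : Ideal (MvPolynomial (ZMod n) k) :=
  Ideal.span {g | ∃ j < c, j ≠ 1 ∧ g = pgen k n c m j}

/-- `β_i(M) = dim_k Tor_i^S(k, M)` where `S = k[x_0,…,x_{n-1}]` and `k = S/(x_0,…,x_{n-1})`,
computed as the length (= Krull dimension of the submodule lattice) of the `S`-module
`Tor_i^S(k, M)`, which is a `k`-vector space. -/
noncomputable def bettiNumber (k : Type u) [Field k] (n : ℕ) (M : Type u) [AddCommGroup M]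
    [Module (MvPolynomial (ZMod n) k) M] (i : ℕ) : ℕ :=
  letI S := MvPolynomial (ZMod n) k
  letI T := ((Tor (ModuleCat.{u} S) i).obj
      (ModuleCat.of S (S ⧸ (Ideal.span (Set.range (X : ZMod n → S)))))).obj (ModuleCat.of S M)
  ((Order.krullDim (Submodule S T)).unbotD 0).toNat

/-- The `i`-th Betti number of an ideal of `k[x_0,…,x_{n-1}]`, viewed as a module. -/
noncomputable def bettiI (k : Type u) [Field k] (n : ℕ) (I : Ideal (MvPolynomial (ZMod n) k))
    (i : ℕ) : ℕ := bettiNumber k n I i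

/-- The projective dimension `pd(M) = sup { i : β_i(M) ≠ 0 }`. -/
noncomputable def projDimI (k : Type u) [Field k] (n : ℕ)
    (I : Ideal (MvPolynomial (ZMod n) k)) : ℕ∞ :=
  sSup {e : ℕ∞ | ∃ i : ℕ, bettiI k n I i ≠ 0 ∧ e = (i : ℕ∞)}

/-- Binomial coefficient with integer arguments: `0` unless `0 ≤ b ≤ a`. -/
def chooseZ (a b : ℤ) : ℕ := if 0 ≤ b ∧ b ≤ a then a.toNat.choose b.toNat else 0

/-- `f_1 = x_1⋯x_{n-2}`, the first generator of the `(n-2)`-path ideal of the `n`-cycle. -/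
noncomputable def fgen (k : Type u) [Field k] (n : ℕ) (j : ℕ) : MvPolynomial (ZMod n) k :=
  pgen k n n (n - 2) j

/-- The last variable `x_n` of `S_n = k[x_1,…,x_n]`. -/
noncomputable def xlast (k : Type u) [Field k] (n : ℕ) : MvPolynomial (ZMod n) k :=
  X (((n - 1 : ℕ) : ZMod n))

/-- `I_n`, the `(n-2)`-path ideal of the `n`-cycle. -/
noncomputable def Ipath (k : Type u) [Field k] (n : ℕ) : Ideal (MvPolynomial (ZMod n) k) :=
  pathI k n n (n - 2)

/-- `J_n`, the ideal `I_n` with the generator `f_2` omitted. -/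
noncomputable def Jpath (k : Type u) [Field k] (n : ℕ) : Ideal (MvPolynomial (ZMod n) k) :=
  pathJ k n n (n - 2)

/-- `J_{n-1}`, regarded as an ideal of `S_n` via `S_{n-1} ⊂ S_n`: the ideal generated by the
products of `n-3` cyclically consecutive variables in the `(n-1)`-cycle on the first `n-1`
variables, omitting the generator starting at the second position. -/
noncomputable def Jprev (k : Type u) [Field k] (n : ℕ) : Ideal (MvPolynomial (ZMod n) k) :=
  pathJ k n (n - 1) (n - 3)

/-- The ideal `L_d`, the degree-`d` `x_n`-graded component of `J_n^s (x_1,x_n)^t`: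
`(f_1^{s-d} x_1^{t-d})·((f_1)+x_1J_{n-1})^d` if `d ≤ min{s,t}`;
`(x_1^{t-d})·((f_1)+x_1J_{n-1})^s` if `s ≤ d ≤ t`;
`(f_1^{s-d})·J_{n-1}^{d-t}·((f_1)+x_1J_{n-1})^t` if `t ≤ d ≤ s`;
`J_{n-1}^{d-t}·((f_1)+x_1J_{n-1})^{s+t-d}` if `max{s,t} ≤ d ≤ s+t`
(the descriptions agree on overlaps). -/
noncomputable def Ld (k : Type u) [Field k] (n s t d : ℕ) : Ideal (MvPolynomial (ZMod n) k) :=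
  if d ≤ s ∧ d ≤ t then
    Ideal.span {(fgen k n 0) ^ (s - d) * (X (0 : ZMod n) : MvPolynomial (ZMod n) k) ^ (t - d)} *
      (Ideal.span {fgen k n 0} + Ideal.span {(X (0 : ZMod n) : MvPolynomial (ZMod n) k)} *
        Jprev k n) ^ d
  else if d ≤ t then
    Ideal.span {(X (0 : ZMod n) : MvPolynomial (ZMod n) k) ^ (t - d)} *
      (Ideal.span {fgen k n 0} + Ideal.span {(X (0 : ZMod n) : MvPolynomial (ZMod n) k)} *
        Jprev k n) ^ s
  else if d ≤ s then
    Ideal.span {(fgen k n 0) ^ (s - d)} * (Jprev k n) ^ (d - t) *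
      (Ideal.span {fgen k n 0} + Ideal.span {(X (0 : ZMod n) : MvPolynomial (ZMod n) k)} *
        Jprev k n) ^ t
  else
    (Jprev k n) ^ (d - t) *
      (Ideal.span {fgen k n 0} + Ideal.span {(X (0 : ZMod n) : MvPolynomial (ZMod n) k)} *
        Jprev k n) ^ (s + t - d)

section Aux

lemma mod2' (a b : ℕ) (hb : 0 < b) (h : a < 2 * b) :
    a % b = if a < b then a else a - b := by
  split
  · exact Nat.mod_eq_of_lt ‹_›
  · rw [Nat.mod_eq_sub_mod (by omega)]
    exact Nat.mod_eq_of_lt (by omega)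

lemma natcast_ideal_top {R : Type*} [CommRing R] (c : ℕ) (hc : c ≠ 0) :
    ((c : ℕ) : Ideal R) = ⊤ := by
  induction c with
  | zero => contradiction
  | succ m ih =>
    rw [Nat.cast_succ]
    rw [Ideal.one_eq_top, Submodule.add_eq_sup, sup_top_eq]

lemma ideal_binom {R : Type*} [CommRing R] (A B : Ideal R) (m : ℕ) :
    (A + B) ^ m = ∑ i ∈ Finset.range (m + 1), A ^ i * B ^ (m - i) := by
  rw [add_pow]
  refine Finset.sum_congr rfl fun i hi => ?_
  rw [natcast_ideal_top _ (Nat.choose_pos (by simpa using Nat.lt_succ_iff.mp (Finset.mem_range.mp hi))).ne', Ideal.mul_top]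

end Aux
lemma pgen_factor (k : Type u) [Field k] (n : ℕ) (hn : 3 ≤ n) (j : ℕ)
    (hj2 : 2 ≤ j) (hjn : j ≤ n - 1) :
    pgen k n n (n - 2) j
      = X (((n - 1 : ℕ) : ZMod n)) * pgen k n (n - 1) (n - 3) (j % (n - 1)) := by
  unfold pgen
  have hl : n - 1 - j ∈ Finset.range (n - 2) := by
    simp only [Finset.mem_range]; omega
  rw [← Finset.mul_prod_erase _ _ hl]
  have hj' : j % (n - 1) = if j < n - 1 then j else j - (n - 1) :=
    mod2' j (n - 1) (by omega) (by omega)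
  congr 1
  · have : (j + (n - 1 - j)) % n = n - 1 := by
      have h1 : j + (n - 1 - j) = n - 1 := by omega
      rw [h1, Nat.mod_eq_of_lt (by omega)]
    rw [this]
  · refine Finset.prod_nbij' (fun l => if l < n - 1 - j then l else l - 1)
      (fun l => if l < n - 1 - j then l else l + 1) ?_ ?_ ?_ ?_ ?_
    · intro a ha
      simp only [Finset.mem_erase, Finset.mem_range] at ha ⊢
      split <;> omega
    · intro a ha
      simp only [Finset.mem_erase, Finset.mem_range] at ha ⊢
      split <;> omega
    · intro a ha
      simp only [Finset.mem_erase, Finset.mem_range] at ha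
      split_ifs <;> omega
    · intro a ha
      simp only [Finset.mem_range] at ha
      split_ifs <;> omega
    · intro a ha
      simp only [Finset.mem_erase, Finset.mem_range] at ha
      congr 1
      have h1 : (j + a) % n = if j + a < n then j + a else j + a - n :=
        mod2' _ _ (by omega) (by omega)
      have h2 : (j % (n-1) + if a < n - 1 - j then a else a - 1) % (n - 1)
          = if (j % (n-1) + if a < n - 1 - j then a else a - 1) < n - 1
            then (j % (n-1) + if a < n - 1 - j then a else a - 1)
            else (j % (n-1) + if a < n - 1 - j then a else a - 1) - (n - 1) :=
        mod2' _ _ (by omega) (by rw [hj']; split_ifs <;> omega)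
      rw [h1, h2, hj']
      congr 1
      split_ifs <;> omega
lemma JpathEq (k : Type u) [Field k] (n : ℕ) (hn : 3 ≤ n) :
    Jpath k n = Ideal.span {fgen k n 0}
      + Ideal.span {xlast k n} * Jprev k n := by
  apply le_antisymm
  · rw [Jpath, pathJ, Ideal.span_le]
    rintro g ⟨j, hj, hj1, rfl⟩
    by_cases h0 : j = 0
    · subst h0
      exact Submodule.mem_sup_left (Ideal.subset_span rfl)
    · have hj2 : 2 ≤ j := by omega
      rw [pgen_factor k n hn j hj2 (by omega)]
      refine Submodule.mem_sup_right (Ideal.mul_mem_mul (Ideal.subset_span rfl) ?_)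
      refine Ideal.subset_span ⟨j % (n - 1), Nat.mod_lt _ (by omega), ?_, rfl⟩
      have := mod2' j (n - 1) (by omega) (by omega)
      rw [this]; split_ifs <;> omega
  · rw [Submodule.add_eq_sup, sup_le_iff]
    constructor
    · rw [Ideal.span_le]
      rintro g rfl
      exact Ideal.subset_span ⟨0, by omega, by omega, rfl⟩
    · rw [Ideal.mul_le]
      intro r hr g hg
      obtain ⟨c, rfl⟩ := Ideal.mem_span_singleton'.mp hr
      rw [mul_assoc]
      refine Ideal.mul_mem_left _ c ?_
      have key : ∀ g' ∈ Jprev k n, xlast k n * g' ∈ Jpath k n := by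
        intro g' hg'
        refine Submodule.span_induction ?_ ?_ ?_ ?_ hg'
        · rintro x ⟨j', hj'lt, hj'1, rfl⟩
          have hx : xlast k n * pgen k n (n - 1) (n - 3) j'
              = pgen k n n (n - 2) (if j' = 0 then n - 1 else j') := by
            rw [pgen_factor k n hn _ (by split <;> omega) (by split <;> omega)]
            congr 2
            split
            · subst ‹j' = 0›; exact (Nat.mod_self _).symm
            · exact (Nat.mod_eq_of_lt (by omega)).symm
          rw [hx]
          exact Ideal.subset_span ⟨_, by split <;> omega, by split <;> omega, rfl⟩
        · simp
        · intro x y _ _ hx hy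
          rw [mul_add]; exact Ideal.add_mem _ hx hy
        · intro a x _ hx
          rw [smul_eq_mul, mul_left_comm]
          exact Ideal.mul_mem_left _ a hx
      exact key g hg
lemma Ld_eq (k : Type u) [Field k] (n : ℕ) (s t d : ℕ) (hd : d ≤ s + t) :
    Ld k n s t d
      = ∑ p ∈ (Finset.range (s + 1) ×ˢ Finset.range (t + 1)).filter
          (fun p => s + t - p.1 - p.2 = d),
        Ideal.span {fgen k n 0} ^ p.1 * Jprev k n ^ (s - p.1)
          * Ideal.span {(X (0 : ZMod n) : MvPolynomial (ZMod n) k)} ^ p.2 := by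
  rw [Ld]
  split_ifs with h1 h2 h3
  · obtain ⟨hds, hdt⟩ := h1
    rw [← Ideal.span_singleton_mul_span_singleton, ← Ideal.span_singleton_pow,
      ← Ideal.span_singleton_pow, ideal_binom, Finset.mul_sum]
    refine Finset.sum_nbij' (fun p => (s - d + p, t - p)) (fun q => q.1 - (s - d))
      ?_ ?_ ?_ ?_ ?_
    · intro a ha
      simp only [Finset.mem_range] at ha
      simp only [Finset.mem_filter, Finset.mem_product, Finset.mem_range]
      omega
    · intro a ha
      simp only [Finset.mem_filter, Finset.mem_product, Finset.mem_range] at ha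
      simp only [Finset.mem_range]
      omega
    · intro a ha
      simp only [Finset.mem_range] at ha
      dsimp only
      omega
    · intro a ha
      simp only [Finset.mem_filter, Finset.mem_product, Finset.mem_range] at ha
      rw [Prod.mk.injEq]
      constructor <;> omega
    · intro p hp
      simp only [Finset.mem_range] at hp
      dsimp only
      rw [mul_pow]
      have e1 : s - (s - d + p) = d - p := by omega
      have e2 : t - p = (t - d) + (d - p) := by omega
      rw [e1, e2, pow_add]
      ring
  · rw [← Ideal.span_singleton_pow, ideal_binom, Finset.mul_sum]
    refine Finset.sum_nbij' (fun p => (p, t - d + s - p)) (fun q => q.1)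
      ?_ ?_ ?_ ?_ ?_
    · intro a ha
      simp only [Finset.mem_range] at ha
      simp only [Finset.mem_filter, Finset.mem_product, Finset.mem_range]
      omega
    · intro a ha
      simp only [Finset.mem_filter, Finset.mem_product, Finset.mem_range] at ha
      simp only [Finset.mem_range]
      omega
    · intro a ha
      dsimp only
    · intro a ha
      simp only [Finset.mem_filter, Finset.mem_product, Finset.mem_range] at ha
      rw [Prod.mk.injEq]
      constructor <;> omega
    · intro p hp
      simp only [Finset.mem_range] at hp
      dsimp only
      rw [mul_pow]
      have e2 : t - d + s - p = (t - d) + (s - p) := by omega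
      rw [e2, pow_add]
      ring
  · rw [← Ideal.span_singleton_pow, ideal_binom, Finset.mul_sum]
    refine Finset.sum_nbij' (fun p => (s - d + p, t - p)) (fun q => q.1 - (s - d))
      ?_ ?_ ?_ ?_ ?_
    · intro a ha
      simp only [Finset.mem_range] at ha
      simp only [Finset.mem_filter, Finset.mem_product, Finset.mem_range]
      omega
    · intro a ha
      simp only [Finset.mem_filter, Finset.mem_product, Finset.mem_range] at ha
      simp only [Finset.mem_range]
      omega
    · intro a ha
      simp only [Finset.mem_range] at ha
      dsimp only
      omega
    · intro a ha
      simp only [Finset.mem_filter, Finset.mem_product, Finset.mem_range] at ha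
      rw [Prod.mk.injEq]
      constructor <;> omega
    · intro p hp
      simp only [Finset.mem_range] at hp
      dsimp only
      rw [mul_pow]
      have e1 : s - (s - d + p) = (d - t) + (t - p) := by omega
      rw [e1, pow_add, pow_add]
      ring
  · rw [ideal_binom, Finset.mul_sum]
    refine Finset.sum_nbij' (fun p => (p, s + t - d - p)) (fun q => q.1)
      ?_ ?_ ?_ ?_ ?_
    · intro a ha
      simp only [Finset.mem_range] at ha
      simp only [Finset.mem_filter, Finset.mem_product, Finset.mem_range]
      omega
    · intro a ha
      simp only [Finset.mem_filter, Finset.mem_product, Finset.mem_range] at ha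
      simp only [Finset.mem_range]
      omega
    · intro a ha
      dsimp only
    · intro a ha
      simp only [Finset.mem_filter, Finset.mem_product, Finset.mem_range] at ha
      rw [Prod.mk.injEq]
      constructor <;> omega
    · intro p hp
      simp only [Finset.mem_range] at hp
      dsimp only
      rw [mul_pow]
      have e1 : s - p = (d - t) + (s + t - d - p) := by omega
      rw [e1, pow_add]
      ring
/-- For `n ≥ 3` and `s, t ≥ 0`: `J_n^s (x_1,x_n)^t = Σ_{d=0}^{s+t} x_n^d · L_d`. -/
theorem decomposition_Js_x1xn_t (k : Type u) [Field k] (n : ℕ) (hn : 3 ≤ n) (s t : ℕ) :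
    (Jpath k n) ^ s *
        (Ideal.span {(X (0 : ZMod n) : MvPolynomial (ZMod n) k), xlast k n}) ^ t
      = ∑ d ∈ Finset.range (s + t + 1), Ideal.span {(xlast k n) ^ d} * Ld k n s t d := by
  classical
  rw [JpathEq k n hn,
    show (Ideal.span {(X (0 : ZMod n) : MvPolynomial (ZMod n) k), xlast k n})
        = Ideal.span {(X (0 : ZMod n) : MvPolynomial (ZMod n) k)}
          + Ideal.span {xlast k n} from by
      rw [Ideal.span_insert, Submodule.add_eq_sup],
    ideal_binom, ideal_binom, Finset.sum_mul_sum, ← Finset.sum_product']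
  have hmaps : ∀ p ∈ Finset.range (s + 1) ×ˢ Finset.range (t + 1),
      s + t - p.1 - p.2 ∈ Finset.range (s + t + 1) := by
    intro p hp
    simp only [Finset.mem_range]
    omega
  rw [← Finset.sum_fiberwise_of_maps_to hmaps]
  refine Finset.sum_congr rfl fun d hd => ?_
  simp only [Finset.mem_range] at hd
  rw [← Ideal.span_singleton_pow, Ld_eq k n s t d (by omega), Finset.mul_sum]
  refine Finset.sum_congr rfl fun p hp => ?_
  simp only [Finset.mem_filter, Finset.mem_product, Finset.mem_range] at hp
  rw [mul_pow]
  have e1 : d = (s - p.1) + (t - p.2) := by omega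
  rw [e1, pow_add]
  ring
end

section
/- Let n ≥ 3 and s,t ≥ 0 be integers, and let L_0, …, L_{s+t} be the x_n-graded components of J_n^s(x_1,x_n)^t, i.e. L_d = (f_1^{s−d} x_1^{t−d})·((f_1)+x_1J_{n−1})^d for d ≤ min{s,t}, L_d = (x_1^{t−d})·((f_1)+x_1J_{n−1})^s for s ≤ d ≤ t, L_d = (f_1^{s−d})·J_{n−1}^{d−t}·((f_1)+x_1J_{n−1})^t for t ≤ d ≤ s, and L_d = J_{n−1}^{d−t}·((f_1)+x_1J_{n−1})^{s+t−d} for max{s,t} ≤ d ≤ s+t, where f_1 = x_1⋯x_{n−2} and J_{n−1} is regarded as an ideal of S_n via S_{n−1} ⊂ S_n. Define N_{s+t} = L_{s+t} and N_j = L_j + x_n·N_{j+1} for 0 ≤ j ≤ s+t−1. Then for all 0 ≤ j ≤ s+t−1, L_j ∩ x_n N_{j+1} = x_n·L_j. -/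
open MvPolynomial CategoryTheory

universe u

section Aux
variable (k : Type u) [Field k] (n : ℕ)

/-- The algebra endomorphism of `k[x_0,…,x_{n-1}]` sending the last variable to `0`. -/
noncomputable def killLast : MvPolynomial (ZMod n) k →ₐ[k] MvPolynomial (ZMod n) k :=
  aeval (fun i => if i = ((n - 1 : ℕ) : ZMod n) then 0 else X i)

variable {k n}

lemma killLast_X (i : ZMod n) :
    killLast k n (X i) = if i = ((n - 1 : ℕ) : ZMod n) then 0 else X i := by
  simp [killLast]

lemma killLast_xlast : killLast k n (xlast k n) = 0 := by
  simp [xlast, killLast_X]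

lemma killLast_sub_mem (p : MvPolynomial (ZMod n) k) :
    p - killLast k n p ∈ Ideal.span {xlast k n} := by
  induction p using MvPolynomial.induction_on with
  | C a => simp [killLast]
  | add p q hp hq =>
      rw [map_add]
      have := Ideal.add_mem _ hp hq
      rwa [sub_add_sub_comm] at this
  | mul_X p i hp =>
      rw [map_mul, killLast_X]
      by_cases hi : i = ((n - 1 : ℕ) : ZMod n)
      · rw [if_pos hi, mul_zero, sub_zero, hi]
        exact Ideal.mul_mem_left _ _ (Ideal.subset_span rfl)
      · rw [if_neg hi, ← sub_mul]
        exact Ideal.mul_mem_right _ _ hp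

/-- An ideal is "good" if `killLast` maps it into itself and the difference is in `(x_n)·I`. -/
def GoodI (I : Ideal (MvPolynomial (ZMod n) k)) : Prop :=
  ∀ q ∈ I, killLast k n q ∈ I ∧ q - killLast k n q ∈ Ideal.span {xlast k n} * I

lemma goodI_top : GoodI (⊤ : Ideal (MvPolynomial (ZMod n) k)) := by
  intro q _
  refine ⟨trivial, ?_⟩
  rw [Ideal.mul_top]
  exact killLast_sub_mem q

lemma goodI_span (S : Set (MvPolynomial (ZMod n) k)) (hS : ∀ g ∈ S, killLast k n g = g) :
    GoodI (Ideal.span S) := by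
  intro q hq
  induction hq using Submodule.span_induction with
  | mem a ha =>
      rw [hS a ha]
      exact ⟨Ideal.subset_span ha, by simp⟩
  | zero => simp
  | add a b _ _ ha hb =>
      rw [map_add]
      refine ⟨Ideal.add_mem _ ha.1 hb.1, ?_⟩
      have := Ideal.add_mem _ ha.2 hb.2
      rwa [sub_add_sub_comm] at this
  | smul c p hp ih =>
      rw [smul_eq_mul, map_mul]
      refine ⟨Ideal.mul_mem_left _ _ ih.1, ?_⟩
      have key : c * p - killLast k n c * killLast k n p
          = c * (p - killLast k n p) + (c - killLast k n c) * killLast k n p := by ring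
      rw [key]
      refine Ideal.add_mem _ (Ideal.mul_mem_left _ _ ih.2) ?_
      have h2 : (c - killLast k n c) * killLast k n p
          ∈ Ideal.span {xlast k n} * Ideal.span S :=
        Ideal.mul_mem_mul (killLast_sub_mem c) ih.1
      exact h2

lemma GoodI.add {I K : Ideal (MvPolynomial (ZMod n) k)} (hI : GoodI I) (hK : GoodI K) :
    GoodI (I + K) := by
  intro q hq
  rw [Ideal.add_eq_sup, Submodule.mem_sup] at hq
  obtain ⟨a, ha, b, hb, rfl⟩ := hq
  obtain ⟨ha1, ha2⟩ := hI a ha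
  obtain ⟨hb1, hb2⟩ := hK b hb
  constructor
  · rw [map_add]
    exact Ideal.add_mem _ (Ideal.mem_sup_left ha1) (Ideal.mem_sup_right hb1)
  · rw [map_add]
    have h1 : a - killLast k n a ∈ Ideal.span {xlast k n} * (I + K) :=
      Ideal.mul_mono_right le_sup_left ha2
    have h2 : b - killLast k n b ∈ Ideal.span {xlast k n} * (I + K) :=
      Ideal.mul_mono_right le_sup_right hb2
    have := Ideal.add_mem _ h1 h2
    rwa [sub_add_sub_comm] at this

lemma GoodI.mul {I K : Ideal (MvPolynomial (ZMod n) k)} (hI : GoodI I) (hK : GoodI K) :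
    GoodI (I * K) := by
  intro q hq
  refine Submodule.mul_induction_on hq ?_ ?_
  · intro a ha b hb
    obtain ⟨ha1, ha2⟩ := hI a ha
    obtain ⟨hb1, hb2⟩ := hK b hb
    rw [map_mul]
    refine ⟨Ideal.mul_mem_mul ha1 hb1, ?_⟩
    have key : a * b - killLast k n a * killLast k n b
        = a * (b - killLast k n b) + (a - killLast k n a) * killLast k n b := by ring
    rw [key]
    have e1 : I * (Ideal.span {xlast k n} * K) = Ideal.span {xlast k n} * (I * K) := by ring
    have e2 : Ideal.span {xlast k n} * I * K = Ideal.span {xlast k n} * (I * K) := by ring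
    refine Ideal.add_mem _ ?_ ?_
    · rw [← e1]; exact Ideal.mul_mem_mul ha hb2
    · rw [← e2]; exact Ideal.mul_mem_mul ha2 hb1
  · intro x y hx hy
    rw [map_add]
    refine ⟨Ideal.add_mem _ hx.1 hy.1, ?_⟩
    have := Ideal.add_mem _ hx.2 hy.2
    rwa [sub_add_sub_comm] at this

lemma GoodI.pow {I : Ideal (MvPolynomial (ZMod n) k)} (hI : GoodI I) (m : ℕ) :
    GoodI (I ^ m) := by
  induction m with
  | zero => rw [pow_zero, Ideal.one_eq_top]; exact goodI_top
  | succ m ih => rw [pow_succ]; exact ih.mul hI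

lemma killLast_pgen (hn : 3 ≤ n) {c m j : ℕ} (h : ∀ l < m, (j + l) % c < n - 1) :
    killLast k n (pgen k n c m j) = pgen k n c m j := by
  unfold pgen
  rw [map_prod]
  refine Finset.prod_congr rfl ?_
  intro l hl
  rw [Finset.mem_range] at hl
  rw [killLast_X, if_neg]
  intro heq
  have h1 : ((j + l) % c : ℕ) < n := lt_of_lt_of_le (h l hl) (by omega)
  have := congrArg ZMod.val heq
  rw [ZMod.val_natCast_of_lt h1, ZMod.val_natCast_of_lt (by omega : n - 1 < n)] at this
  exact absurd this (by have := h l hl; omega)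

lemma killLast_fgen (hn : 3 ≤ n) : killLast k n (fgen k n 0) = fgen k n 0 := by
  refine killLast_pgen hn ?_
  intro l hl
  rw [Nat.zero_add, Nat.mod_eq_of_lt (by omega)]
  omega

lemma killLast_X0 (hn : 3 ≤ n) : killLast k n (X (0 : ZMod n)) = X (0 : ZMod n) := by
  rw [killLast_X, if_neg]
  intro heq
  have := congrArg ZMod.val heq.symm
  rw [ZMod.val_natCast_of_lt (by omega : n - 1 < n)] at this
  have h0 : (0 : ZMod n).val = 0 := by
    haveI : NeZero n := ⟨by omega⟩
    exact ZMod.val_zero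
  rw [h0] at this
  omega

lemma goodI_Jprev (hn : 3 ≤ n) : GoodI (Jprev k n) := by
  refine goodI_span _ ?_
  rintro g ⟨j, hj, -, rfl⟩
  refine killLast_pgen hn ?_
  intro l _
  exact Nat.mod_lt _ (by omega)

lemma fgen_mem_Jprev (hn : 3 ≤ n) : fgen k n 0 ∈ Jprev k n := by
  have key : fgen k n 0 = pgen k n (n - 1) (n - 3) 0 * X (((n - 3 : ℕ) : ZMod n)) := by
    unfold fgen pgen
    have h2 : n - 2 = (n - 3) + 1 := by omega
    rw [h2, Finset.prod_range_succ]
    congr 1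
    · refine Finset.prod_congr rfl ?_
      intro l hl
      rw [Finset.mem_range] at hl
      rw [Nat.mod_eq_of_lt (by omega : 0 + l < n), Nat.mod_eq_of_lt (by omega : 0 + l < n - 1)]
    · rw [Nat.mod_eq_of_lt (by omega : 0 + (n-3) < n), Nat.zero_add]
  rw [key]
  refine Ideal.mul_mem_right _ _ ?_
  exact Ideal.subset_span ⟨0, by omega, by omega, rfl⟩
lemma goodI_Ld (hn : 3 ≤ n) (s t d : ℕ) : GoodI (Ld k n s t d) := by
  have hf := killLast_fgen (k := k) hn
  have hx := killLast_X0 (k := k) hn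
  have hJ := goodI_Jprev (k := k) hn
  have hA : GoodI (Ideal.span {fgen k n 0} +
      Ideal.span {(X (0 : ZMod n) : MvPolynomial (ZMod n) k)} * Jprev k n) := by
    refine GoodI.add ?_ (GoodI.mul ?_ hJ)
    · exact goodI_span _ (by rintro g rfl; exact hf)
    · exact goodI_span _ (by rintro g rfl; exact hx)
  unfold Ld
  split_ifs with h1 h2 h3
  · refine GoodI.mul (goodI_span _ ?_) (hA.pow _)
    rintro g rfl
    rw [map_mul, map_pow, map_pow, hf, hx]
  · refine GoodI.mul (goodI_span _ ?_) (hA.pow _)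
    rintro g rfl
    rw [map_pow, hx]
  · refine GoodI.mul (GoodI.mul (goodI_span _ ?_) (hJ.pow _)) (hA.pow _)
    rintro g rfl
    rw [map_pow, hf]
  · exact GoodI.mul (hJ.pow _) (hA.pow _)

lemma Ld_le_succ (hn : 3 ≤ n) (s t d : ℕ) (hd : d < s + t) :
    Ld k n s t d ≤ Ld k n s t (d + 1) := by
  set f : MvPolynomial (ZMod n) k := fgen k n 0 with hfdef
  set x : MvPolynomial (ZMod n) k := X (0 : ZMod n) with hxdef
  set J : Ideal (MvPolynomial (ZMod n) k) := Jprev k n with hJdef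
  set A : Ideal (MvPolynomial (ZMod n) k) := Ideal.span {f} + Ideal.span {x} * J with hAdef
  have hfJ : f ∈ J := fgen_mem_Jprev hn
  have hAJ : A ≤ J := by
    rw [hAdef]
    exact sup_le ((Ideal.span_singleton_le_iff_mem _).mpr hfJ) Ideal.mul_le_right
  have hfxA : f * x ∈ A := by
    rw [hAdef]
    exact Ideal.mem_sup_left (Ideal.mem_span_singleton.mpr (Dvd.intro x rfl))
  have stepf : ∀ a : ℕ, Ideal.span {f ^ (a + 1)} ≤ Ideal.span {f ^ a} * J := by
    intro a
    rw [Ideal.span_singleton_le_iff_mem _, pow_succ]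
    exact Ideal.mul_mem_mul (Ideal.mem_span_singleton_self _) hfJ
  have stepA : ∀ a : ℕ, A ^ (a + 1) ≤ J * A ^ a := by
    intro a
    rw [pow_succ']
    exact Ideal.mul_mono_left hAJ
  unfold Ld
  by_cases hs : d < s <;> by_cases ht : d < t
  · -- B1 → B1
    rw [if_pos ⟨by omega, by omega⟩, if_pos (⟨by omega, by omega⟩ : d + 1 ≤ s ∧ d + 1 ≤ t)]
    have step : Ideal.span {f ^ (s - d) * x ^ (t - d)}
        ≤ Ideal.span {f ^ (s - (d + 1)) * x ^ (t - (d + 1))} * A := by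
      rw [Ideal.span_singleton_le_iff_mem _,
        show s - d = s - (d + 1) + 1 by omega, show t - d = t - (d + 1) + 1 by omega,
        pow_succ, pow_succ, show f ^ (s - (d+1)) * f * (x ^ (t - (d+1)) * x)
          = (f ^ (s - (d+1)) * x ^ (t - (d+1))) * (f * x) by ring]
      exact Ideal.mul_mem_mul (Ideal.mem_span_singleton_self _) hfxA
    calc Ideal.span {f ^ (s - d) * x ^ (t - d)} * A ^ d
        ≤ Ideal.span {f ^ (s - (d + 1)) * x ^ (t - (d + 1))} * A * A ^ d :=
          Ideal.mul_mono_left step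
      _ = Ideal.span {f ^ (s - (d + 1)) * x ^ (t - (d + 1))} * A ^ (d + 1) := by
          rw [mul_assoc, ← pow_succ']
  · -- d ≥ t
    by_cases hdt : d = t
    · subst hdt
      by_cases hds : d + 1 ≤ s
      · -- B1 → B3 : d = t < s
        rw [if_pos ⟨by omega, le_refl _⟩, if_neg (by omega), if_neg (by omega), if_pos hds]
        have e0 : d + 1 - d = 1 := by omega
        rw [Nat.sub_self, pow_zero, mul_one, e0, pow_one]
        exact Ideal.mul_mono_left (stepf (s - (d + 1)) |>.trans_eq'
          (by rw [show s - d = s - (d + 1) + 1 by omega]))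
      · -- B1 → B4 : d = s = t, d ≥ 1
        have hds' : d = s := by omega
        rw [if_pos ⟨by omega, le_refl _⟩, if_neg (by omega), if_neg (by omega), if_neg (by omega)]
        rw [show s - d = 0 by omega, show d - d = 0 by omega, pow_zero, pow_zero, mul_one,
          Ideal.span_singleton_one, Ideal.top_mul, show d + 1 - d = 1 by omega, pow_one,
          show s + d - (d + 1) = d - 1 by omega]
        calc A ^ d = A ^ (d - 1 + 1) := by rw [show d - 1 + 1 = d by omega]
          _ ≤ J * A ^ (d - 1) := stepA _
    · -- B3 or B4 on the left, t < d
      by_cases hds : d + 1 ≤ s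
      · -- B3 → B3
        rw [if_neg (by omega), if_neg (by omega), if_pos (by omega : d ≤ s),
          if_neg (by omega), if_neg (by omega), if_pos hds]
        have step := stepf (s - (d + 1))
        rw [show s - (d+1) + 1 = s - d by omega] at step
        calc Ideal.span {f ^ (s - d)} * J ^ (d - t) * A ^ t
            ≤ Ideal.span {f ^ (s - (d + 1))} * J * J ^ (d - t) * A ^ t := by
              exact Ideal.mul_mono_left (Ideal.mul_mono_left step)
          _ = Ideal.span {f ^ (s - (d + 1))} * J ^ (d + 1 - t) * A ^ t := by
              rw [show d + 1 - t = d - t + 1 by omega, pow_succ]; ring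
      · -- t < d, d + 1 > s
        by_cases hds2 : d ≤ s
        · -- B3 → B4 : t < d = s, t ≥ 1
          have hdse : d = s := by omega
          rw [if_neg (by omega), if_neg (by omega), if_pos hds2,
            if_neg (by omega), if_neg (by omega), if_neg (by omega)]
          rw [show s - d = 0 by omega, pow_zero, Ideal.span_singleton_one, Ideal.top_mul,
            show s + t - (d + 1) = t - 1 by omega]
          calc J ^ (d - t) * A ^ t = J ^ (d - t) * (A * A ^ (t - 1)) := by
                rw [← pow_succ', show t - 1 + 1 = t by omega]
            _ ≤ J ^ (d - t) * (J * A ^ (t - 1)) :=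
                Ideal.mul_mono_right (Ideal.mul_mono_left hAJ)
            _ = J ^ (d + 1 - t) * A ^ (t - 1) := by
                rw [show d + 1 - t = d - t + 1 by omega, pow_succ]; ring
        · -- B4 → B4
          rw [if_neg (by omega), if_neg (by omega), if_neg (by omega),
            if_neg (by omega), if_neg (by omega), if_neg (by omega)]
          calc J ^ (d - t) * A ^ (s + t - d) = J ^ (d - t) * (A * A ^ (s + t - (d + 1))) := by
                rw [← pow_succ', show s + t - (d + 1) + 1 = s + t - d by omega]
            _ ≤ J ^ (d - t) * (J * A ^ (s + t - (d + 1))) :=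
                Ideal.mul_mono_right (Ideal.mul_mono_left hAJ)
            _ = J ^ (d + 1 - t) * A ^ (s + t - (d + 1)) := by
                rw [show d + 1 - t = d - t + 1 by omega, pow_succ]; ring
  · -- d ≥ s, d < t
    by_cases hdse : d ≤ s
    · -- B1 → B2 : d = s < t
      have : d = s := by omega
      rw [if_pos ⟨hdse, by omega⟩, if_neg (by omega), if_pos (by omega : d + 1 ≤ t)]
      rw [show s - d = 0 by omega, pow_zero, one_mul, this]
      exact Ideal.mul_mono_left (Ideal.span_singleton_le_span_singleton.mpr
        (pow_dvd_pow x (by omega)))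
    · -- B2 → B2 : s < d, d + 1 ≤ t
      rw [if_neg (by omega), if_pos (by omega : d ≤ t), if_neg (by omega),
        if_pos (by omega : d + 1 ≤ t)]
      exact Ideal.mul_mono_left (Ideal.span_singleton_le_span_singleton.mpr
        (pow_dvd_pow x (by omega)))
  · -- d ≥ s, d ≥ t : here d = t > s (B2 → B4) or d > t (handled above? no: ht false, hs false)
    by_cases hdt2 : d ≤ t
    · -- d = t, s < d? if also d ≤ s then covered? hs false means d ≥ s.
      have hdte : d = t := by omega
      by_cases hdse : d ≤ s
      · -- d = s = t again?  hs false and ht false, d ≤ s, d ≤ t: d = s = t: B1 → B4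
        rw [if_pos ⟨hdse, hdt2⟩, if_neg (by omega), if_neg (by omega), if_neg (by omega)]
        rw [show s - d = 0 by omega, show t - d = 0 by omega, pow_zero, pow_zero, mul_one,
          Ideal.span_singleton_one, Ideal.top_mul, show d + 1 - t = 1 by omega, pow_one,
          show s + t - (d + 1) = d - 1 by omega]
        calc A ^ d = A ^ (d - 1 + 1) := by rw [show d - 1 + 1 = d by omega]
          _ ≤ J * A ^ (d - 1) := stepA _
      · -- B2 → B4 : s < d = t, s ≥ 1
        rw [if_neg (by omega), if_pos hdt2, if_neg (by omega), if_neg (by omega),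
          if_neg (by omega)]
        rw [show t - d = 0 by omega, pow_zero, Ideal.span_singleton_one, Ideal.top_mul,
          show d + 1 - t = 1 by omega, pow_one, show s + t - (d + 1) = s - 1 by omega]
        calc A ^ s = A ^ (s - 1 + 1) := by rw [show s - 1 + 1 = s by omega]
          _ ≤ J * A ^ (s - 1) := stepA _
    · -- t < d, but also ¬(d < t) was ht; this is same as earlier branch? No: here hs false too.
      by_cases hds2 : d ≤ s
      · -- t < d = s?? but hs : ¬ d < s so d = s, t < d : B3 → B4
        rw [if_neg (by omega), if_neg (by omega), if_pos hds2,
          if_neg (by omega), if_neg (by omega), if_neg (by omega)]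
        rw [show s - d = 0 by omega, pow_zero, Ideal.span_singleton_one, Ideal.top_mul,
          show s + t - (d + 1) = t - 1 by omega]
        calc J ^ (d - t) * A ^ t = J ^ (d - t) * (A * A ^ (t - 1)) := by
              rw [← pow_succ', show t - 1 + 1 = t by omega]
          _ ≤ J ^ (d - t) * (J * A ^ (t - 1)) :=
              Ideal.mul_mono_right (Ideal.mul_mono_left hAJ)
          _ = J ^ (d + 1 - t) * A ^ (t - 1) := by
              rw [show d + 1 - t = d - t + 1 by omega, pow_succ]; ring
      · -- B4 → B4
        rw [if_neg (by omega), if_neg (by omega), if_neg (by omega),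
          if_neg (by omega), if_neg (by omega), if_neg (by omega)]
        calc J ^ (d - t) * A ^ (s + t - d) = J ^ (d - t) * (A * A ^ (s + t - (d + 1))) := by
              rw [← pow_succ', show s + t - (d + 1) + 1 = s + t - d by omega]
          _ ≤ J ^ (d - t) * (J * A ^ (s + t - (d + 1))) :=
              Ideal.mul_mono_right (Ideal.mul_mono_left hAJ)
          _ = J ^ (d + 1 - t) * A ^ (s + t - (d + 1)) := by
              rw [show d + 1 - t = d - t + 1 by omega, pow_succ]; ring

theorem intersection_Nj' (k : Type u) [Field k] (n : ℕ) (hn : 3 ≤ n) (s t : ℕ)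
    (N : ℕ → Ideal (MvPolynomial (ZMod n) k))
    (hNtop : N (s + t) = Ld k n s t (s + t))
    (hNrec : ∀ j < s + t, N j = Ld k n s t j + Ideal.span {xlast k n} * N (j + 1)) :
    ∀ j < s + t,
      (Ld k n s t j) ⊓ (Ideal.span {xlast k n} * N (j + 1))
        = Ideal.span {xlast k n} * Ld k n s t j := by
  intro j hj
  have hgood := goodI_Ld (k := k) hn s t j
  apply le_antisymm
  · intro q hq
    obtain ⟨hqL, hqx⟩ := Submodule.mem_inf.mp hq
    have hqx' : q ∈ Ideal.span {xlast k n} := Ideal.mul_le_left hqx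
    obtain ⟨m, rfl⟩ := Ideal.mem_span_singleton'.mp hqx'
    have hk : killLast k n (m * xlast k n) = 0 := by
      rw [map_mul, killLast_xlast, mul_zero]
    have h2 := (hgood _ hqL).2
    rwa [hk, sub_zero] at h2
  · refine le_inf Ideal.mul_le_right (Ideal.mul_mono_right ?_)
    have h1 : Ld k n s t j ≤ Ld k n s t (j + 1) := Ld_le_succ hn s t j hj
    by_cases hj1 : j + 1 < s + t
    · rw [hNrec (j + 1) hj1]
      exact h1.trans le_sup_left
    · have he : j + 1 = s + t := by omega
      rw [he, hNtop, ← he]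
      exact h1

end Aux

/-- For `n ≥ 3`, `s, t ≥ 0`, and ideals `N_j` defined by the downward recursion
`N_{s+t} = L_{s+t}` and `N_j = L_j + x_n·N_{j+1}` for `0 ≤ j ≤ s+t-1`:
for all `0 ≤ j ≤ s+t-1`, `L_j ∩ x_n N_{j+1} = x_n·L_j`. -/
theorem intersection_Nj (k : Type u) [Field k] (n : ℕ) (hn : 3 ≤ n) (s t : ℕ)
    (N : ℕ → Ideal (MvPolynomial (ZMod n) k))
    (hNtop : N (s + t) = Ld k n s t (s + t))
    (hNrec : ∀ j < s + t, N j = Ld k n s t j + Ideal.span {xlast k n} * N (j + 1)) :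
    ∀ j < s + t,
      (Ld k n s t j) ⊓ (Ideal.span {xlast k n} * N (j + 1))
        = Ideal.span {xlast k n} * Ld k n s t j :=
  intersection_Nj' k n hn s t N hNtop hNrec
end
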